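/- Let I and J be monomial ideals of R = K[x_1,…,x_n], let u be a monomial with supp(u) ∩ (supp(I) ∪ supp(J)) = ∅, and set L = uI + J. Then for every integer t ≥ 1, (L^t : u^t) + (L^t + (u^t)) = (I + J)^t + (u^t). -/

import Mathlib

open MvPolynomial Pointwise

/-- `I` is a monomial ideal admitting a monomial generating set in which no
monomial is divisible by a variable `x_i` with `i ∈ A`; equivalently, `I` is a
monomial ideal whose support is disjoint from `A`. -/
def MonomialIdealAvoiding {K : Type*} [Field K] {n : ℕ} (A : Set (Fin n))
    (I : Ideal (MvPolynomial (Fin n) K)) : Prop :=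
  ∃ S : Set (Fin n →₀ ℕ), (∀ e ∈ S, ∀ i ∈ A, e i = 0) ∧
    I = Ideal.span ((fun e => MvPolynomial.monomial e (1 : K)) '' S)

section Aux

variable {K : Type*} [Field K] {n : ℕ}

/-- t-fold sumset of a set of exponent vectors. -/
def sumpow (S : Set (Fin n →₀ ℕ)) : ℕ → Set (Fin n →₀ ℕ)
  | 0 => {0}
  | t + 1 => Set.image2 (· + ·) S (sumpow S t)

lemma mono_image_mul (S1 S2 : Set (Fin n →₀ ℕ)) :
    ((fun e => monomial e (1 : K)) '' S1) * ((fun e => monomial e (1 : K)) '' S2)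
      = (fun e => monomial e (1 : K)) '' (Set.image2 (· + ·) S1 S2) := by
  rw [← Set.image2_mul, Set.image2_image_left, Set.image2_image_right,
    Set.image_image2]
  exact Set.image2_congr fun a _ b _ => by rw [monomial_mul, one_mul]

lemma MS_mul (S1 S2 : Set (Fin n →₀ ℕ)) :
    Ideal.span ((fun e => monomial e (1 : K)) '' S1) *
      Ideal.span ((fun e => monomial e (1 : K)) '' S2)
      = Ideal.span ((fun e => monomial e (1 : K)) '' (Set.image2 (· + ·) S1 S2)) := by
  rw [Ideal.span_mul_span', mono_image_mul]

lemma MS_pow (S : Set (Fin n →₀ ℕ)) (t : ℕ) :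
    Ideal.span ((fun e => monomial e (1 : K)) '' S) ^ t
      = Ideal.span ((fun e => monomial e (1 : K)) '' (sumpow S t)) := by
  induction t with
  | zero =>
      simp [sumpow, Ideal.span_singleton_one]
  | succ t ih =>
      rw [pow_succ', ih, MS_mul]
      rfl

lemma sumpow_avoid {S : Set (Fin n →₀ ℕ)} {A : Set (Fin n)}
    (hS : ∀ e ∈ S, ∀ i ∈ A, e i = 0) (t : ℕ) :
    ∀ e ∈ sumpow S t, ∀ i ∈ A, e i = 0 := by
  induction t with
  | zero => rintro e he i hi; simp_all [sumpow]
  | succ t ih =>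
      rintro e ⟨a, ha, b, hb, rfl⟩ i hi
      simp [Finsupp.add_apply, hS a ha i hi, ih b hb i hi]

lemma sumpow_mono {S T : Set (Fin n →₀ ℕ)} (h : S ⊆ T) (t : ℕ) :
    sumpow S t ⊆ sumpow T t := by
  induction t with
  | zero => exact Set.Subset.rfl
  | succ t ih => exact Set.image2_subset h ih

/-- Decomposition of exponents of generators of `L^t`. -/
lemma sumpow_decomp (d : Fin n →₀ ℕ) (SI SJ : Set (Fin n →₀ ℕ)) (t : ℕ) :
    ∀ e ∈ sumpow (((fun s => d + s) '' SI) ∪ SJ) t,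
      ∃ k ≤ t, ∃ s ∈ sumpow (SI ∪ SJ) t, e = k • d + s := by
  induction t with
  | zero =>
      rintro e he
      exact ⟨0, le_rfl, 0, rfl, by simpa [sumpow] using he⟩
  | succ t ih =>
      rintro e ⟨a, ha, b, hb, rfl⟩
      obtain ⟨k, hk, s, hs, rfl⟩ := ih b hb
      rcases ha with ⟨s', hs', rfl⟩ | ha
      · refine ⟨k + 1, by omega, s' + s, ⟨s', Or.inl hs', s, hs, rfl⟩, ?_⟩
        show d + s' + (k • d + s) = (k + 1) • d + (s' + s)
        rw [succ_nsmul]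
        abel
      · refine ⟨k, by omega, a + s, ⟨a, Or.inr ha, s, hs, rfl⟩, ?_⟩
        abel

end Aux

theorem colon_add_add_pow_eq
    {K : Type*} [Field K] {n : ℕ}
    (I J : Ideal (MvPolynomial (Fin n) K))
    (d : Fin n →₀ ℕ)
    (hdI : MonomialIdealAvoiding (↑d.support) I)
    (hdJ : MonomialIdealAvoiding (↑d.support) J)
    (L : Ideal (MvPolynomial (Fin n) K))
    (hL : L = Ideal.span {(MvPolynomial.monomial d (1 : K))} * I + J)
    (t : ℕ) (ht : 1 ≤ t) :
    (L ^ t).colon (Ideal.span {(MvPolynomial.monomial d (1 : K)) ^ t})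
        + (L ^ t + Ideal.span {(MvPolynomial.monomial d (1 : K)) ^ t})
      = (I + J) ^ t + Ideal.span {(MvPolynomial.monomial d (1 : K)) ^ t} := by
  obtain ⟨SI, hSI, rfl⟩ := hdI
  obtain ⟨SJ, hSJ, rfl⟩ := hdJ
  set u : MvPolynomial (Fin n) K := monomial d 1 with hu
  -- basic rewrites
  have hIJ : Ideal.span ((fun e => monomial e (1 : K)) '' SI)
      + Ideal.span ((fun e => monomial e (1 : K)) '' SJ)
      = Ideal.span ((fun e => monomial e (1 : K)) '' (SI ∪ SJ)) := by
    rw [Set.image_union, Ideal.span_union]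
    rfl
  have hLspan : L = Ideal.span ((fun e => monomial e (1 : K)) ''
      (((fun s => d + s) '' SI) ∪ SJ)) := by
    have h1 : Ideal.span {u} = Ideal.span ((fun e => monomial e (1 : K)) '' ({d} : Set _)) := by
      simp [hu]
    rw [hL, Set.image_union, Ideal.span_union, ← Submodule.add_eq_sup, h1, MS_mul,
      Set.image2_singleton_left]
  -- L ≤ I + J
  have hLle : L ≤ Ideal.span ((fun e => monomial e (1 : K)) '' SI)
      + Ideal.span ((fun e => monomial e (1 : K)) '' SJ) := by
    rw [hL]
    exact add_le_add Ideal.mul_le_right le_rfl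
  -- the colon ideal: hard direction
  have hcolon_le : (L ^ t).colon (Ideal.span {u ^ t})
      ≤ (Ideal.span ((fun e => monomial e (1 : K)) '' SI)
        + Ideal.span ((fun e => monomial e (1 : K)) '' SJ)) ^ t := by
    intro f hf
    rw [Ideal.mem_colon_span_singleton] at hf
    have hf' : f * u ^ t ∈ Ideal.span ((fun e => monomial e (1 : K)) ''
        (sumpow (((fun s => d + s) '' SI) ∪ SJ) t)) := by
      rw [← MS_pow, ← hLspan]; exact hf
    rw [hIJ, MS_pow, mem_ideal_span_monomial_image]
    rw [mem_ideal_span_monomial_image] at hf'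
    intro m hm
    have hmem : m + t • d ∈ (f * u ^ t).support := by
      rw [hu, monomial_pow, one_pow]
      rw [mem_support_iff, coeff_mul_monomial]
      simpa [mem_support_iff] using hm
    obtain ⟨e, he, hle⟩ := hf' _ hmem
    obtain ⟨k, hk, s, hs, rfl⟩ := sumpow_decomp d SI SJ t e he
    refine ⟨s, hs, ?_⟩
    -- s ≤ m coordinatewise
    intro i
    by_cases hi : i ∈ d.support
    · have : s i = 0 := sumpow_avoid (A := ↑d.support)
        (by rintro e (he | he) i hi
            exacts [hSI e he i hi, hSJ e he i hi]) t s hs i hi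
      simp [this]
    · have h1 := hle i
      have hdi : d i = 0 := Finsupp.notMem_support_iff.mp hi
      simpa [Finsupp.add_apply, Finsupp.smul_apply, hdi] using h1
  -- easy direction: (I+J)^t ≤ colon
  have hIJle : (Ideal.span ((fun e => monomial e (1 : K)) '' SI)
      + Ideal.span ((fun e => monomial e (1 : K)) '' SJ)) ^ t
      ≤ (L ^ t).colon (Ideal.span {u ^ t}) := by
    intro f hf
    rw [Ideal.mem_colon_span_singleton]
    have key : Ideal.span {u} * (Ideal.span ((fun e => monomial e (1 : K)) '' SI)
        + Ideal.span ((fun e => monomial e (1 : K)) '' SJ)) ≤ L := by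
      rw [mul_add, hL]
      exact add_le_add le_rfl Ideal.mul_le_right
    have : f * u ^ t ∈ (Ideal.span {u} * (Ideal.span ((fun e => monomial e (1 : K)) '' SI)
        + Ideal.span ((fun e => monomial e (1 : K)) '' SJ))) ^ t := by
      rw [mul_pow, mul_comm f]
      exact Ideal.mul_mem_mul (by
        rw [Ideal.span_singleton_pow]
        exact Ideal.mem_span_singleton_self _) hf
    exact pow_le_pow_left' key t this
  -- finish
  apply le_antisymm
  · refine sup_le (le_trans hcolon_le le_sup_left) (sup_le ?_ le_sup_right)
    exact le_trans (pow_le_pow_left' hLle t) le_sup_left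
  · exact sup_le (le_trans hIJle le_sup_left) (le_sup_of_le_right le_sup_right)
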